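/- Let β ∈ (√2/2, √3/2), ε ∈ (0, 2β²-1], a = (β, √(1-β²)), b = (β, -√(1-β²)) ∈ ℝ², and define B = (1/2+ε)aaᵀ + (1/2-ε)bbᵀ. Let λ₁ᵇ ≥ λ₂ᵇ be the eigenvalues of B and λ₁ = β², λ₂ = 1-β². Then λ₁ᵇ > λ₁ > λ₂ > λ₂ᵇ. -/

import Mathlib

open Matrix

/-- The matrix `B = (1/2+ε)aaᵀ + (1/2-ε)bbᵀ` with
`a = (β, √(1-β²))`, `b = (β, -√(1-β²))`. -/
noncomputable def Bmat (β ε : ℝ) : Matrix (Fin 2) (Fin 2) ℝ :=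
  (1 / 2 + ε : ℝ) • Matrix.vecMulVec ![β, Real.sqrt (1 - β ^ 2)]
      ![β, Real.sqrt (1 - β ^ 2)]
    + (1 / 2 - ε : ℝ) • Matrix.vecMulVec ![β, -Real.sqrt (1 - β ^ 2)]
      ![β, -Real.sqrt (1 - β ^ 2)]

/-- For `β ∈ (√2/2, √3/2)` and `ε ∈ (0, 2β²-1]`, the eigenvalues
`λ₁ᵇ ≥ λ₂ᵇ` of `B = (1/2+ε)aaᵀ + (1/2-ε)bbᵀ` satisfy
`λ₁ᵇ > λ₁ = β² > 1-β² = λ₂ > λ₂ᵇ`. -/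
theorem Bmat_eigenvalue_separation (β ε : ℝ)
    (h1 : Real.sqrt 2 / 2 < β) (h2 : β < Real.sqrt 3 / 2)
    (hε1 : 0 < ε) (hε2 : ε ≤ 2 * β ^ 2 - 1)
    (hB : (Bmat β ε).IsHermitian) :
    β ^ 2 < max (hB.eigenvalues 0) (hB.eigenvalues 1)
    ∧ 1 - β ^ 2 < β ^ 2
    ∧ min (hB.eigenvalues 0) (hB.eigenvalues 1) < 1 - β ^ 2 := by
  have hs2 : Real.sqrt 2 ^ 2 = 2 := Real.sq_sqrt (by norm_num)
  have hs3 : Real.sqrt 3 ^ 2 = 3 := Real.sq_sqrt (by norm_num)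
  have hs2n : 0 ≤ Real.sqrt 2 := Real.sqrt_nonneg 2
  have hs3n : 0 ≤ Real.sqrt 3 := Real.sqrt_nonneg 3
  have hβ0 : 0 < β := by nlinarith
  have hb1 : 1 / 2 < β ^ 2 := by nlinarith
  have hb2 : β ^ 2 < 3 / 4 := by nlinarith
  have hβ : (0:ℝ) ≤ 1 - β ^ 2 := by nlinarith
  have hs : Real.sqrt (1 - β ^ 2) ^ 2 = 1 - β ^ 2 := Real.sq_sqrt hβ
  -- trace and determinant
  have htr : hB.eigenvalues 0 + hB.eigenvalues 1 = (Bmat β ε).trace := by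
    have h := hB.trace_eq_sum_eigenvalues
    rw [Fin.sum_univ_two] at h
    simpa using h.symm
  have hdet : hB.eigenvalues 0 * hB.eigenvalues 1 = (Bmat β ε).det := by
    have h := hB.det_eq_prod_eigenvalues
    rw [Fin.prod_univ_two] at h
    simpa using h.symm
  have htrval : (Bmat β ε).trace = 1 := by
    simp [Matrix.trace_fin_two, Bmat, vecMulVec_apply]
    linear_combination hs
  have hdetval : (Bmat β ε).det = β ^ 2 * (1 - β ^ 2) * (1 - 4 * ε ^ 2) := by
    simp [Matrix.det_fin_two, Bmat, vecMulVec_apply]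
    linear_combination (β ^ 2 * (1 - 4 * ε ^ 2)) * hs
  set x := hB.eigenvalues 0 with hx
  set y := hB.eigenvalues 1 with hy
  have hsum : x + y = 1 := by rw [htr, htrval]
  have hprod : x * y = β ^ 2 * (1 - β ^ 2) * (1 - 4 * ε ^ 2) := by rw [hdet, hdetval]
  have key : ∀ a b : ℝ, a ≤ b → a + b = 1 →
      a * b = β ^ 2 * (1 - β ^ 2) * (1 - 4 * ε ^ 2) → β ^ 2 < b ∧ a < 1 - β ^ 2 := by
    intro a b hab hab1 habp
    have hb12 : 1 / 2 ≤ b := by linarith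
    have hbig : β ^ 2 < b := by
      by_contra hcon
      push_neg at hcon
      have h1' : (0:ℝ) ≤ (β ^ 2 - b) * (b + β ^ 2 - 1) :=
        mul_nonneg (by linarith) (by linarith)
      have h2' : (0:ℝ) < β ^ 2 * (1 - β ^ 2) * ε ^ 2 :=
        mul_pos (mul_pos (pow_pos hβ0 2) (by nlinarith)) (pow_pos hε1 2)
      nlinarith
    exact ⟨hbig, by linarith⟩
  rcases le_total x y with hxy | hxy
  · obtain ⟨hA, hC⟩ := key x y hxy hsum hprod
    rw [max_eq_right hxy, min_eq_left hxy]
    exact ⟨hA, by linarith, hC⟩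
  · obtain ⟨hA, hC⟩ := key y x hxy (by linarith) (by linarith [hprod, mul_comm x y])
    rw [max_eq_left hxy, min_eq_right hxy]
    exact ⟨hA, by linarith, hC⟩
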